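/- arXiv:2405.01275 — 2 statements merged into one kernel-verified Lean document; each statement's English description precedes it below -/
import Mathlib

section
/- Let ρ: [0,∞) → [0,∞) be nondecreasing and concave with ρ(0) = 0, differentiable on (0,∞). Then for any vectors β, β' ∈ ℝ^s with min_j |β_j| ≥ d and ‖β' − β‖_2 ≤ γ where γ < d, one has |∑_j ρ(|β'_j|) − ∑_j ρ(|β_j|)| ≤ √s · γ · ρ'(d − γ). -/
open Set

/-- One-sided Lipschitz bound for a concave function on `[c, ∞)`. -/
lemma concave_lipschitz_aux (ρ : ℝ → ℝ) (hconc : ConcaveOn ℝ (Ici 0) ρ)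
    (hdiff : ∀ x : ℝ, 0 < x → DifferentiableAt ℝ ρ x)
    {c x y : ℝ} (hc : 0 < c) (hcx : c ≤ x) (hxy : x ≤ y) :
    ρ y - ρ x ≤ deriv ρ c * (y - x) := by
  rcases eq_or_lt_of_le hxy with rfl | hxy'
  · simp
  have hx0 : (0:ℝ) < x := lt_of_lt_of_le hc hcx
  have hy0 : (0:ℝ) < y := lt_trans hx0 hxy'
  have hslope : slope ρ x y ≤ deriv ρ x :=
    hconc.slope_le_deriv (le_of_lt hx0) (le_of_lt hy0) hxy' (hdiff x hx0)
  have hanti : AntitoneOn (deriv ρ) (Ioi (0:ℝ)) := by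
    have := (hconc.subset (Ioi_subset_Ici le_rfl) (convex_Ioi 0)).antitoneOn_deriv
      (fun z hz => hdiff z hz)
    exact this
  have hderiv : deriv ρ x ≤ deriv ρ c := hanti hc (lt_of_lt_of_le hc hcx) hcx
  have hs : slope ρ x y = (ρ y - ρ x) / (y - x) := by
    rw [slope_def_field]
  have h1 : (ρ y - ρ x) / (y - x) ≤ deriv ρ c := by
    rw [← hs]; exact hslope.trans hderiv
  have hyx : (0:ℝ) < y - x := sub_pos.mpr hxy'
  calc ρ y - ρ x = (ρ y - ρ x) / (y - x) * (y - x) := by field_simp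
    _ ≤ deriv ρ c * (y - x) := mul_le_mul_of_nonneg_right h1 (le_of_lt hyx)

lemma concave_abs_lipschitz (ρ : ℝ → ℝ) (hmono : MonotoneOn ρ (Ici 0))
    (hconc : ConcaveOn ℝ (Ici 0) ρ)
    (hdiff : ∀ x : ℝ, 0 < x → DifferentiableAt ℝ ρ x)
    {c x y : ℝ} (hc : 0 < c) (hcx : c ≤ x) (hcy : c ≤ y) :
    |ρ x - ρ y| ≤ deriv ρ c * |x - y| := by
  rcases le_total x y with h | h
  · have h1 := concave_lipschitz_aux ρ hconc hdiff hc hcx h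
    have h2 : ρ x ≤ ρ y := hmono (le_trans hc.le hcx) (le_trans hc.le hcy) h
    rw [abs_sub_comm, abs_of_nonneg (by linarith), abs_sub_comm, abs_of_nonneg (by linarith)]
    linarith
  · have h1 := concave_lipschitz_aux ρ hconc hdiff hc hcy h
    have h2 : ρ y ≤ ρ x := hmono (le_trans hc.le hcy) (le_trans hc.le hcx) h
    rw [abs_of_nonneg (by linarith), abs_of_nonneg (by linarith)]
    linarith

/-- Penalty perturbation bound: for a nondecreasing concave penalty `ρ` with `ρ 0 = 0`,
differentiable on `(0, ∞)`, and vectors `β, β'` with `min_j |β j| ≥ d` and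
`‖β' - β‖₂ ≤ γ < d`, one has
`|∑ ρ(|β' j|) - ∑ ρ(|β j|)| ≤ √s · γ · ρ'(d - γ)`. -/
theorem penalty_perturbation_bound
    (ρ : ℝ → ℝ) (hρ0 : ρ 0 = 0) (hmono : MonotoneOn ρ (Ici 0))
    (hconc : ConcaveOn ℝ (Ici 0) ρ)
    (hdiff : ∀ x : ℝ, 0 < x → DifferentiableAt ℝ ρ x)
    (s : ℕ) (β β' : Fin s → ℝ) (d γ : ℝ) (hd : 0 < d) (hγ0 : 0 ≤ γ) (hγd : γ < d)
    (hβ : ∀ j, d ≤ |β j|)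
    (hclose : Real.sqrt (∑ j, (β' j - β j) ^ 2) ≤ γ) :
    abs ((∑ j, ρ (|β' j|)) - ∑ j, ρ (|β j|)) ≤ Real.sqrt s * γ * deriv ρ (d - γ) := by
  set c := d - γ with hc_def
  have hc : 0 < c := by simp [hc_def]; linarith
  -- sum of squares bound
  have hsq_nonneg : (0:ℝ) ≤ ∑ j, (β' j - β j) ^ 2 :=
    Finset.sum_nonneg fun j _ => sq_nonneg _
  have hsum_sq : ∑ j, (β' j - β j) ^ 2 ≤ γ ^ 2 := by
    have := Real.sq_sqrt hsq_nonneg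
    nlinarith [Real.sqrt_nonneg (∑ j, (β' j - β j) ^ 2)]
  -- each coordinate deviation ≤ γ
  have hcoord : ∀ j, |β' j - β j| ≤ γ := by
    intro j
    have h1 : (β' j - β j) ^ 2 ≤ ∑ i, (β' i - β i) ^ 2 :=
      Finset.single_le_sum (f := fun i => (β' i - β i) ^ 2) (fun i _ => sq_nonneg _)
        (Finset.mem_univ j)
    have := h1.trans hsum_sq
    nlinarith [abs_nonneg (β' j - β j), sq_abs (β' j - β j)]
  have hβ'c : ∀ j, c ≤ |β' j| := by
    intro j
    have h1 := abs_sub_abs_le_abs_sub (β j) (β' j)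
    have h2 : |β j - β' j| ≤ γ := by rw [abs_sub_comm]; exact hcoord j
    have h3 := hβ j
    simp only [hc_def]
    linarith
  have hβc : ∀ j, c ≤ |β j| := fun j =>
    le_trans (by simp only [hc_def]; linarith) (hβ j)
  -- derivative nonneg
  have hK0 : 0 ≤ deriv ρ c := by
    have hs : slope ρ c (c + 1) ≤ deriv ρ c :=
      hconc.slope_le_deriv (mem_Ici.mpr hc.le) (mem_Ici.mpr (by linarith))
        (by linarith) (hdiff c hc)
    have hm : ρ c ≤ ρ (c + 1) := hmono hc.le (by simp; linarith) (by linarith)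
    have : slope ρ c (c + 1) = ρ (c + 1) - ρ c := by
      rw [slope_def_field]; field_simp; ring
    linarith [hs, this ▸ hs]
  -- pointwise bound
  have hpt : ∀ j, |ρ (|β' j|) - ρ (|β j|)| ≤ deriv ρ c * |β' j - β j| := by
    intro j
    have h1 := concave_abs_lipschitz ρ hmono hconc hdiff hc (hβ'c j) (hβc j)
    have h2 : |(|β' j|) - (|β j|)| ≤ |β' j - β j| := abs_abs_sub_abs_le_abs_sub _ _
    exact h1.trans (mul_le_mul_of_nonneg_left h2 hK0)
  -- Cauchy-Schwarz
  have hCS : ∑ j, |β' j - β j| ≤ Real.sqrt s * γ := by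
    have h1 : (∑ j, |β' j - β j|) ^ 2 ≤ (s : ℝ) * ∑ j, |β' j - β j| ^ 2 := by
      have := sq_sum_le_card_mul_sum_sq (s := (Finset.univ : Finset (Fin s)))
        (f := fun j => |β' j - β j|)
      simpa using this
    have h2 : ∑ j, |β' j - β j| ^ 2 = ∑ j, (β' j - β j) ^ 2 := by
      simp [sq_abs]
    have h3 : (∑ j, |β' j - β j|) ^ 2 ≤ (s : ℝ) * γ ^ 2 := by
      rw [h2] at h1
      exact h1.trans (mul_le_mul_of_nonneg_left hsum_sq (Nat.cast_nonneg s))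
    have h4 : (0:ℝ) ≤ ∑ j, |β' j - β j| := Finset.sum_nonneg fun j _ => abs_nonneg _
    have h5 : Real.sqrt ((∑ j, |β' j - β j|) ^ 2) ≤ Real.sqrt ((s:ℝ) * γ ^ 2) :=
      Real.sqrt_le_sqrt h3
    rwa [Real.sqrt_sq h4, Real.sqrt_mul (Nat.cast_nonneg s), Real.sqrt_sq hγ0] at h5
  calc abs ((∑ j, ρ (|β' j|)) - ∑ j, ρ (|β j|))
      = |∑ j, (ρ (|β' j|) - ρ (|β j|))| := by rw [Finset.sum_sub_distrib]
    _ ≤ ∑ j, |ρ (|β' j|) - ρ (|β j|)| := Finset.abs_sum_le_sum_abs _ _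
    _ ≤ ∑ j, deriv ρ c * |β' j - β j| := Finset.sum_le_sum fun j _ => hpt j
    _ = deriv ρ c * ∑ j, |β' j - β j| := by rw [Finset.mul_sum]
    _ ≤ deriv ρ c * (Real.sqrt s * γ) := mul_le_mul_of_nonneg_left hCS hK0
    _ = Real.sqrt s * γ * deriv ρ c := by ring
end

section
/- Let F: ℝ^p → ℝ be given by F(β) = L(β) − ∑_{j=1}^p ρ_θ(|β_j|) where L is twice continuously differentiable and concave-type conditions hold on the support: if β̂ with support S = {1,...,s} satisfies (i) ∂_j F exists and is 0 for j ∈ S, (ii) |∂_j L(β̂)| < θ ρ'(0+) for j ∉ S, and (iii) the restriction of F to the subspace {β: β_j = 0, j ∉ S} has negative definite Hessian at β̂ (i.e., λ_min(−∇²_{SS} L(β̂)) > θ κ with θκ ≥ sup of penalty curvature on a neighborhood), then β̂ is a strict local maximizer of F on ℝ^p. -/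
open Set Filter

namespace KKTAux

lemma hasDerivAt_line {p : ℕ} {G : Type*} [NormedAddCommGroup G] [NormedSpace ℝ G]
    {f : (Fin p → ℝ) → G} (hf : Differentiable ℝ f) (x v : Fin p → ℝ) (t : ℝ) :
    HasDerivAt (fun t : ℝ => f (x + t • v)) (fderiv ℝ f (x + t • v) v) t := by
  have h1 : HasDerivAt (fun t : ℝ => x + t • v) v t := by
    simpa using ((hasDerivAt_id t).smul_const v).const_add x
  exact (hf _).hasFDerivAt.comp_hasDerivAt t h1

lemma clm_apply_eq_sum {p : ℕ} (φ : (Fin p → ℝ) →L[ℝ] ℝ) (v : Fin p → ℝ) :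
    φ v = ∑ j, v j * φ (Pi.single j 1) := by
  have hv : v = ∑ j, v j • (Pi.single j (1:ℝ) : Fin p → ℝ) := by
    ext k
    simp [Finset.sum_apply, Pi.single_apply]
  calc φ v = φ (∑ j, v j • (Pi.single j (1:ℝ) : Fin p → ℝ)) := by rw [← hv]
    _ = ∑ j, v j * φ (Pi.single j 1) := by rw [map_sum]; simp

lemma abs_add_of_abs_lt {x y : ℝ} (hx : x ≠ 0) (h : |y| < |x|) :
    |x + y| = (if 0 < x then (1:ℝ) else -1) * (x + y) := by
  rcases abs_lt.1 h with ⟨h1, h2⟩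
  rcases hx.lt_or_gt with hneg | hpos
  · rw [abs_of_neg hneg] at h1 h2
    rw [if_neg (not_lt.2 hneg.le), abs_of_neg (by linarith)]; ring
  · rw [abs_of_pos hpos] at h1 h2
    rw [if_pos hpos, abs_of_pos (by linarith)]; ring

lemma penalty_linear_lb {ρ : ℝ → ℝ} (hρ0 : ρ 0 = 0) (hmono : MonotoneOn ρ (Ici 0))
    (hdiff : ∀ x : ℝ, 0 < x → DifferentiableAt ℝ ρ x)
    {c δ3 : ℝ} (hc : 0 < c) (hlb : ∀ u, 0 < u → u < δ3 → c ≤ deriv ρ u)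
    {t : ℝ} (ht0 : 0 ≤ t) (ht : t < δ3) : c * t ≤ ρ t := by
  rcases eq_or_lt_of_le ht0 with rfl | htpos
  · simp [hρ0]
  by_contra hcon
  push_neg at hcon
  have hρt0 : 0 ≤ ρ t := by
    have := hmono self_mem_Ici (mem_Ici.2 htpos.le) htpos.le
    simpa [hρ0] using this
  set u := (c * t - ρ t) / (2 * c) with hu
  have hnum : 0 < c * t - ρ t := by linarith
  have hupos : 0 < u := by positivity
  have hut : u < t := by
    rw [hu, div_lt_iff₀ (by positivity)]
    nlinarith
  obtain ⟨w, hw, hws⟩ := exists_hasDerivAt_eq_slope ρ (deriv ρ) hut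
    (fun x hx => ((hdiff x (lt_of_lt_of_le hupos hx.1)).continuousAt).continuousWithinAt)
    (fun x hx => (hdiff x (lt_trans hupos hx.1)).hasDerivAt)
  have h1 : c ≤ deriv ρ w := hlb w (lt_trans hupos hw.1) (lt_trans hw.2 ht)
  have hρu : 0 ≤ ρ u := by
    have := hmono self_mem_Ici (mem_Ici.2 hupos.le) hupos.le
    simpa [hρ0] using this
  rw [hws, le_div_iff₀ (by linarith)] at h1
  rw [hu] at h1
  have h2 : c * (t - (c * t - ρ t) / (2 * c)) = c * t - (c * t - ρ t) / 2 := by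
    field_simp
  nlinarith [h1, h2]

end KKTAux

open KKTAux

set_option maxHeartbeats 8000000

/-- KKT-type characterization of strict local maximizers of a nonconcave penalized
objective `F(β) = L(β) - ∑ⱼ θ ρ(|βⱼ|)`: if `β̂` is supported on `S = {1, ..., s}`
with (i) vanishing partial derivatives of `F` on `S`, (ii) `|∂ⱼ L(β̂)| < θ ρ0'`
off `S`, and (iii) the Hessian of `L` restricted to `S` is bounded above by
`-λ · id` with `λ > θ κ`, where `κ` bounds the local concavity of the penalty near
the active coefficients, then `β̂` is a strict local maximizer of `F` on `ℝ^p`. -/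
theorem kkt_strict_local_maximizer
    (p s : ℕ) (hsp : s ≤ p)
    (L : (Fin p → ℝ) → ℝ) (hL : ContDiff ℝ 2 L)
    (θ : ℝ) (hθ : 0 < θ)
    (ρ : ℝ → ℝ) (hρ0 : ρ 0 = 0) (hmono : MonotoneOn ρ (Ici 0))
    (hconc : ConcaveOn ℝ (Ici 0) ρ)
    (hdiff : ∀ x : ℝ, 0 < x → DifferentiableAt ℝ ρ x)
    (ρ0' : ℝ) (hρ0' : Tendsto (deriv ρ) (nhdsWithin 0 (Ioi 0)) (nhds ρ0'))
    (βhat : Fin p → ℝ)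
    (hsupp0 : ∀ j : Fin p, s ≤ (j : ℕ) → βhat j = 0)
    (hsuppne : ∀ j : Fin p, (j : ℕ) < s → βhat j ≠ 0)
    (F : (Fin p → ℝ) → ℝ)
    (hF : F = fun β => L β - ∑ j, θ * ρ (|β j|))
    -- (i) first-order condition on the support
    (hfoc : ∀ j : Fin p, (j : ℕ) < s →
      HasDerivAt (fun t => F (Function.update βhat j t)) 0 (βhat j))
    -- (ii) strict dual-feasibility off the support
    (hineq : ∀ j : Fin p, s ≤ (j : ℕ) →
      |deriv (fun t => L (Function.update βhat j t)) (βhat j)| < θ * ρ0')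
    -- (iii) second-order condition: penalty curvature bound and negative definite
    -- restricted Hessian dominating it
    (κ : ℝ) (hκ : 0 ≤ κ) (r : ℝ) (hr : 0 < r)
    (hcurv : ∀ j : Fin p, (j : ℕ) < s → ∀ a b : ℝ,
      a ∈ Ioo (|βhat j| - r) (|βhat j| + r) →
      b ∈ Ioo (|βhat j| - r) (|βhat j| + r) →
      a ≤ b → deriv ρ a - deriv ρ b ≤ κ * (b - a))
    (lam : ℝ) (hlam : θ * κ < lam)
    (hhess : ∀ v : Fin p → ℝ, (∀ j : Fin p, s ≤ (j : ℕ) → v j = 0) →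
      (fderiv ℝ (fderiv ℝ L) βhat v) v ≤ -lam * ∑ j, (v j) ^ 2) :
    ∃ ε : ℝ, 0 < ε ∧ ∀ β : Fin p → ℝ, β ≠ βhat → ‖β - βhat‖ < ε → F β < F βhat := by
  classical
  have hLdiff : Differentiable ℝ L := hL.differentiable (by norm_num)
  have hD1 : ContDiff ℝ 1 (fderiv ℝ L) := hL.fderiv_right (by norm_num)
  have hD1diff : Differentiable ℝ (fderiv ℝ L) := hD1.differentiable (by norm_num)
  have hD1cont : Continuous (fderiv ℝ L) := hD1.continuous
  have hD2cont : Continuous (fderiv ℝ (fderiv ℝ L)) := hD1.continuous_fderiv (by norm_num)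
  set D1 : (Fin p → ℝ) → (Fin p → ℝ) →L[ℝ] ℝ := fderiv ℝ L with hD1def
  set D2 := fderiv ℝ (fderiv ℝ L) with hD2def
  set e : Fin p → (Fin p → ℝ) := fun j => Pi.single j 1 with hedef
  set σ : Fin p → ℝ := fun j => if 0 < βhat j then 1 else -1 with hσdef
  have hσ1 : ∀ j, σ j = 1 ∨ σ j = -1 := by
    intro j; rw [hσdef]; dsimp only; split <;> simp
  have hσsq : ∀ j, σ j * σ j = 1 := by
    intro j; rcases hσ1 j with h | h <;> rw [h] <;> norm_num
  have hσabs : ∀ j (x : ℝ), |σ j * x| = |x| := by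
    intro j x; rcases hσ1 j with h | h <;> rw [h] <;> simp
  have hσa : ∀ j, σ j * βhat j = |βhat j| := by
    intro j; rw [hσdef]; dsimp only
    rcases lt_trichotomy (βhat j) 0 with h | h | h
    · rw [if_neg (not_lt.2 h.le), abs_of_neg h]; ring
    · simp [h]
    · rw [if_pos h, abs_of_pos h]; ring
  -- derivative of L along coordinate updates
  have hLupd : ∀ j : Fin p, HasDerivAt (fun t => L (Function.update βhat j t))
      (D1 βhat (e j)) (βhat j) := by
    intro j
    have hupd : ∀ t : ℝ, Function.update βhat j t = βhat + (t - βhat j) • e j := by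
      intro t; ext k
      rcases eq_or_ne k j with rfl | hk
      · simp [hedef, Function.update_self]
      · simp [hedef, Function.update_of_ne hk, Pi.single_eq_of_ne hk]
    have h1 : HasDerivAt (fun t : ℝ => βhat + (t - βhat j) • e j) (e j) (βhat j) := by
      simpa using (((hasDerivAt_id (βhat j)).sub_const (βhat j)).smul_const (e j)).const_add βhat
    have h2 : HasFDerivAt L (D1 βhat) (βhat + (βhat j - βhat j) • e j) := by
      simpa using (hLdiff βhat).hasFDerivAt
    have := h2.comp_hasDerivAt (βhat j) h1
    have heq : (fun t => L (Function.update βhat j t)) =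
        fun t => L (βhat + (t - βhat j) • e j) := by
      funext t; rw [hupd]
    rw [heq]
    exact this
  -- first-order conditions rewritten
  have hkey : ∀ j : Fin p, (j : ℕ) < s →
      D1 βhat (e j) = θ * (deriv ρ (|βhat j|) * σ j) := by
    intro j hj
    have hbj : βhat j ≠ 0 := hsuppne j hj
    have haj : 0 < |βhat j| := abs_pos.2 hbj
    have haj' : 0 < σ j * βhat j := by rw [hσa]; exact haj
    -- derivative of the penalty term in coordinate j
    have hinner : HasDerivAt (fun t : ℝ => σ j * t) (σ j) (βhat j) := by
      simpa using (hasDerivAt_id (βhat j)).const_mul (σ j)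
    have h2 : HasDerivAt (fun t => θ * ρ (σ j * t))
        (θ * (deriv ρ (σ j * βhat j) * σ j)) (βhat j) := by
      have := ((hdiff _ haj').hasDerivAt.comp (βhat j) hinner).const_mul θ
      simpa [Function.comp] using this
    have heq : (fun t => θ * ρ (|t|)) =ᶠ[nhds (βhat j)] (fun t => θ * ρ (σ j * t)) := by
      rcases hbj.lt_or_gt with h | h
      · filter_upwards [Iio_mem_nhds h] with t ht
        have : σ j = -1 := by
          rw [hσdef]; dsimp only; rw [if_neg (not_lt.2 h.le)]
        rw [this, abs_of_neg ht]; ring_nf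
      · filter_upwards [Ioi_mem_nhds h] with t ht
        have : σ j = 1 := by rw [hσdef]; dsimp only; rw [if_pos h]
        rw [this, abs_of_pos ht]; ring_nf
    have hρpart : HasDerivAt (fun t => θ * ρ (|t|))
        (θ * (deriv ρ (|βhat j|) * σ j)) (βhat j) := by
      rw [← hσa]
      exact h2.congr_of_eventuallyEq heq
    -- F along coordinate j
    have hFupd : (fun t => F (Function.update βhat j t)) =
        fun t => L (Function.update βhat j t) - θ * ρ (|t|) -
          ∑ k ∈ Finset.univ.erase j, θ * ρ (|βhat k|) := by
      funext t
      rw [hF]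
      dsimp only
      rw [← Finset.add_sum_erase _ _ (Finset.mem_univ j), Function.update_self]
      have : ∀ k ∈ Finset.univ.erase j,
          θ * ρ (|Function.update βhat j t k|) = θ * ρ (|βhat k|) := by
        intro k hk
        rw [Function.update_of_ne (Finset.ne_of_mem_erase hk)]
      rw [Finset.sum_congr rfl this]
      ring
    have hcomb : HasDerivAt (fun t => F (Function.update βhat j t))
        (D1 βhat (e j) - θ * (deriv ρ (|βhat j|) * σ j)) (βhat j) := by
      rw [hFupd]
      exact ((hLupd j).sub hρpart).sub_const _
    have := hcomb.unique (hfoc j hj)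
    linarith [this]
  have hineq' : ∀ j : Fin p, s ≤ (j : ℕ) → |D1 βhat (e j)| < θ * ρ0' := by
    intro j hj
    have := hineq j hj
    rwa [(hLupd j).deriv] at this
  -- constants
  set ε0 : ℝ := (lam - θ * κ) / 2 with hε0def
  have hε0pos : 0 < ε0 := by rw [hε0def]; linarith
  obtain ⟨δ1, hδ1pos, hδ1⟩ : ∃ δ1 > 0, ∀ ξ : Fin p → ℝ, ‖ξ - βhat‖ < δ1 →
      ‖D2 ξ - D2 βhat‖ ≤ ε0 := by
    obtain ⟨δ, hδ, h⟩ := (Metric.continuousAt_iff (f := D2) (a := βhat)).mp (by exact hD2cont.continuousAt) ε0 hε0pos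
    exact ⟨δ, hδ, fun ξ hξ => le_of_lt (by
      have := h (x := ξ) (by simpa [dist_eq_norm] using hξ)
      exact lt_of_le_of_lt (le_of_eq (dist_eq_norm (D2 ξ) (D2 βhat)).symm) this)⟩
  set Aset : Finset (Fin p) := Finset.univ.filter (fun j : Fin p => s ≤ (j : ℕ)) with hAdef
  set m : ℝ := if h : Aset.Nonempty then Aset.inf' h (fun j => θ * ρ0' - |D1 βhat (e j)|)
    else 1 with hmdef
  have hmAj : ∀ j : Fin p, s ≤ (j : ℕ) → j ∈ Aset := by
    intro j hj; rw [hAdef]; simp [hj]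
  have hmpos : 0 < m := by
    rw [hmdef]; split
    · rename_i h
      rw [Finset.lt_inf'_iff]
      intro j hj
      have hjs : s ≤ (j : ℕ) := by
        rw [hAdef] at hj; simpa using hj
      have := hineq' j hjs
      linarith [abs_nonneg (D1 βhat (e j))]
    · exact one_pos
  have hmle : ∀ j : Fin p, s ≤ (j : ℕ) → |D1 βhat (e j)| ≤ θ * ρ0' - m := by
    intro j hj
    have hjA : j ∈ Aset := hmAj j hj
    rw [hmdef, dif_pos ⟨j, hjA⟩]
    have := Finset.inf'_le (fun j => θ * ρ0' - |D1 βhat (e j)|) hjA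
    linarith [this]
  obtain ⟨δ2, hδ2pos, hδ2⟩ : ∃ δ2 > 0, ∀ ξ : Fin p → ℝ, ‖ξ - βhat‖ < δ2 →
      ‖D1 ξ - D1 βhat‖ ≤ m / 3 := by
    obtain ⟨δ, hδ, h⟩ := Metric.continuousAt_iff.mp (hD1cont.continuousAt (x := βhat)) (m / 3)
      (by linarith)
    exact ⟨δ, hδ, fun ξ hξ => le_of_lt (by
      have := h (x := ξ) (by simpa [dist_eq_norm] using hξ)
      simpa [dist_eq_norm] using this)⟩
  obtain ⟨δ3, hδ3pos, hδ3⟩ : ∃ δ3 > 0, ∀ u : ℝ, 0 < u → u < δ3 →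
      ρ0' - m / (3 * θ) ≤ deriv ρ u := by
    obtain ⟨δ, hδ, h⟩ := Metric.tendsto_nhdsWithin_nhds.mp hρ0' (m / (3 * θ)) (by positivity)
    refine ⟨δ, hδ, fun u hu hud => ?_⟩
    have := h (mem_Ioi.2 hu) (by simpa [Real.dist_eq, abs_of_pos hu] using hud)
    rw [Real.dist_eq, abs_lt] at this
    linarith [this.1]
  set Sset : Finset (Fin p) := Finset.univ.filter (fun j : Fin p => (j : ℕ) < s) with hSdef
  set b : ℝ := if h : Sset.Nonempty then Sset.inf' h (fun j => |βhat j|) else 1 with hbdef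
  have hbpos : 0 < b := by
    rw [hbdef]; split
    · rename_i h
      rw [Finset.lt_inf'_iff]
      intro j hj
      have hjs : (j : ℕ) < s := by rw [hSdef] at hj; simpa using hj
      exact abs_pos.2 (hsuppne j hjs)
    · exact one_pos
  have hble : ∀ j : Fin p, (j : ℕ) < s → b ≤ |βhat j| := by
    intro j hj
    have hjS : j ∈ Sset := by rw [hSdef]; simp [hj]
    rw [hbdef, dif_pos ⟨j, hjS⟩]
    exact Finset.inf'_le _ hjS
  -- the radius
  refine ⟨min δ1 (min δ2 (min δ3 (min b r))), by positivity, ?_⟩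
  intro β hβne hβε
  set δ : Fin p → ℝ := β - βhat with hδdef
  have hδnorm : ‖δ‖ < min δ1 (min δ2 (min δ3 (min b r))) := hβε
  have hδ1' : ‖δ‖ < δ1 := lt_of_lt_of_le hδnorm (min_le_left _ _)
  have hδ2' : ‖δ‖ < δ2 := lt_of_lt_of_le hδnorm ((min_le_right _ _).trans (min_le_left _ _))
  have hδ3' : ‖δ‖ < δ3 := lt_of_lt_of_le hδnorm
    ((min_le_right _ _).trans ((min_le_right _ _).trans (min_le_left _ _)))
  have hδb : ‖δ‖ < b := lt_of_lt_of_le hδnorm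
    ((min_le_right _ _).trans ((min_le_right _ _).trans ((min_le_right _ _).trans
      (min_le_left _ _))))
  have hδr : ‖δ‖ < r := lt_of_lt_of_le hδnorm
    ((min_le_right _ _).trans ((min_le_right _ _).trans ((min_le_right _ _).trans
      (min_le_right _ _))))
  have hδj : ∀ j, |δ j| ≤ ‖δ‖ := by
    intro j
    have := norm_le_pi_norm δ j
    simpa [Real.norm_eq_abs] using this
  set δS : Fin p → ℝ := fun j => if (j : ℕ) < s then δ j else 0 with hδSdef
  set δO : Fin p → ℝ := fun j => if (j : ℕ) < s then 0 else δ j with hδOdef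
  have hδS0 : ∀ j : Fin p, s ≤ (j : ℕ) → δS j = 0 := by
    intro j hj; rw [hδSdef]; simp [Nat.not_lt.2 hj]
  have hδSj : ∀ j, |δS j| ≤ ‖δ‖ := by
    intro j; rw [hδSdef]; dsimp only; split
    · exact hδj j
    · simpa using norm_nonneg δ
  have hδOj : ∀ j, |δO j| ≤ ‖δ‖ := by
    intro j; rw [hδOdef]; dsimp only; split
    · simpa using norm_nonneg δ
    · exact hδj j
  have hδSnorm : ‖δS‖ ≤ ‖δ‖ := by
    rw [pi_norm_le_iff_of_nonneg (norm_nonneg δ)]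
    intro j; simpa [Real.norm_eq_abs] using hδSj j
  have hβdecomp : β = βhat + δS + δO := by
    ext j
    rw [hδSdef, hδOdef]
    simp only [Pi.add_apply]
    split
    · rw [hδdef]; simp
    · rw [hδdef]; simp
  -- Claim 1 : strict decrease along the support part
  have hC1 : δS ≠ 0 → F (βhat + δS) < F βhat := by
    intro hδSne
    have hFval : ∀ x, F x = L x - ∑ j, θ * ρ (|x j|) := fun x => by rw [hF]
    set d : Fin p → ℝ := fun j => σ j * δS j with hddef
    have hdabs : ∀ j, |d j| = |δS j| := by
      intro j
      show |σ j * δS j| = |δS j|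
      exact hσabs j (δS j)
    have hdlt : ∀ j, |d j| < b := fun j => by
      rw [hdabs]; exact lt_of_le_of_lt (hδSj j) hδb
    have hdr : ∀ j, |d j| < r := fun j => by
      rw [hdabs]; exact lt_of_le_of_lt (hδSj j) hδr
    have hδSD : ∀ j : Fin p, δS j ≠ 0 → (j : ℕ) < s := by
      intro j h0
      by_contra h
      push_neg at h
      exact h0 (hδS0 j h)
    have hd0iff : ∀ j : Fin p, d j = 0 ↔ δS j = 0 := by
      intro j
      constructor
      · intro h
        have : σ j * δS j = 0 := h
        rcases mul_eq_zero.1 this with h' | h'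
        · rcases hσ1 j with h1 | h1 <;> rw [h1] at h' <;> norm_num at h'
        · exact h'
      · intro h
        show σ j * δS j = 0
        rw [h, mul_zero]
    have hjlt : ∀ j : Fin p, d j ≠ 0 → (j : ℕ) < s := fun j h =>
      hδSD j (fun h0 => h ((hd0iff j).2 h0))
    have hpos : ∀ (j : Fin p) (t : ℝ), |t| ≤ 1 → d j ≠ 0 → 0 < |βhat j| + t * d j := by
      intro j t ht hdj0
      have h1 : b ≤ |βhat j| := hble j (hjlt j hdj0)
      have h2 : |t * d j| ≤ |d j| := by
        rw [abs_mul]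
        nlinarith [abs_nonneg (d j), abs_nonneg t]
      have h3 := hdlt j
      have h4 := neg_abs_le (t * d j)
      linarith
    -- derivative of the comparison function
    have hg : ∀ t : ℝ, |t| ≤ 1 →
        HasDerivAt (fun t => L (βhat + t • δS) - ∑ j, θ * ρ (|βhat j| + t * d j))
          (D1 (βhat + t • δS) δS - ∑ j, θ * (deriv ρ (|βhat j| + t * d j) * d j)) t := by
      intro t ht
      apply HasDerivAt.sub
      · exact hasDerivAt_line hLdiff βhat δS t
      · apply HasDerivAt.fun_sum
        intro j _
        by_cases hdj0 : d j = 0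
        · simp only [hdj0, mul_zero, add_zero]
          exact hasDerivAt_const t _
        · have hinner : HasDerivAt (fun u : ℝ => |βhat j| + u * d j) (d j) t := by
            simpa using ((hasDerivAt_id t).mul_const (d j)).const_add (|βhat j|)
          have hρd := (hdiff _ (hpos j t ht hdj0)).hasDerivAt
          have := (hρd.comp t hinner).const_mul θ
          simpa [Function.comp] using this
    obtain ⟨τ, hτmem, hτeq⟩ := exists_hasDerivAt_eq_slope
      (fun t => L (βhat + t • δS) - ∑ j, θ * ρ (|βhat j| + t * d j))
      (fun t => D1 (βhat + t • δS) δS - ∑ j, θ * (deriv ρ (|βhat j| + t * d j) * d j))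
      one_pos
      (fun t ht => (hg t (abs_le.2 ⟨by linarith [ht.1], ht.2⟩)).continuousAt.continuousWithinAt)
      (fun t ht => hg t (abs_le.2 ⟨by linarith [ht.1.le], ht.2.le⟩))
    have hτ1 : |τ| ≤ 1 := abs_le.2 ⟨by linarith [hτmem.1.le], hτmem.2.le⟩
    -- endpoint values
    have habs1 : ∀ j : Fin p, |βhat j + δS j| = |βhat j| + d j := by
      intro j
      by_cases h0 : δS j = 0
      · have hd0 : d j = 0 := (hd0iff j).2 h0
        rw [h0, hd0, add_zero, add_zero]
      · have hjs := hδSD j h0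
        have hne := hsuppne j hjs
        have hlt : |δS j| < |βhat j| := lt_of_lt_of_le (lt_of_le_of_lt (hδSj j) hδb)
          (hble j hjs)
        have h1 := abs_add_of_abs_lt hne hlt
        have h2 : (if 0 < βhat j then (1:ℝ) else -1) = σ j := by rw [hσdef]
        rw [h1, h2, mul_add, hσa]
    have hg1 : L (βhat + (1:ℝ) • δS) - ∑ j, θ * ρ (|βhat j| + 1 * d j) = F (βhat + δS) := by
      rw [hFval]
      rw [one_smul]
      congr 1
      apply Finset.sum_congr rfl
      intro j _
      rw [one_mul, show ((βhat + δS) j) = βhat j + δS j from rfl, habs1 j]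
    have hg0 : L (βhat + (0:ℝ) • δS) - ∑ j, θ * ρ (|βhat j| + 0 * d j) = F βhat := by
      rw [hFval]
      simp
    have hmvt : F (βhat + δS) - F βhat =
        D1 (βhat + τ • δS) δS - ∑ j, θ * (deriv ρ (|βhat j| + τ * d j) * d j) := by
      rw [← hg1, ← hg0, hτeq]
      norm_num
    clear hτeq hg hg1 hg0
    -- vanishing derivative at 0
    have hg'0 : D1 βhat δS - ∑ j, θ * (deriv ρ (|βhat j|) * d j) = 0 := by
      have hexp : D1 βhat δS = ∑ j, δS j * D1 βhat (e j) := by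
        simp only [hedef]
        exact clm_apply_eq_sum (D1 βhat) δS
      rw [hexp, ← Finset.sum_sub_distrib]
      apply Finset.sum_eq_zero
      intro j _
      by_cases h0 : δS j = 0
      · have hd0 : d j = 0 := (hd0iff j).2 h0
        rw [h0, hd0]
        ring
      · have hjs := hδSD j h0
        rw [hkey j hjs]
        show δS j * (θ * (deriv ρ (|βhat j|) * σ j)) - θ * (deriv ρ (|βhat j|) * (σ j * δS j)) = 0
        ring
    -- second mean value theorem for the smooth part
    have hφ : ∀ t : ℝ, HasDerivAt (fun t => D1 (βhat + t • δS) δS)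
        ((D2 (βhat + t • δS) δS) δS) t := by
      intro t
      have h1 := hasDerivAt_line (G := (Fin p → ℝ) →L[ℝ] ℝ) hD1diff βhat δS t
      have h2 := h1.clm_apply (hasDerivAt_const t δS)
      simpa using h2
    obtain ⟨ξt, hξmem, hξeq⟩ := exists_hasDerivAt_eq_slope (fun t => D1 (βhat + t • δS) δS)
      (fun t => (D2 (βhat + t • δS) δS) δS) hτmem.1
      (fun t _ => (hφ t).continuousAt.continuousWithinAt) (fun t _ => hφ t)
    have hτpos : 0 < τ := hτmem.1
    have hT1 : D1 (βhat + τ • δS) δS - D1 βhat δS = τ * ((D2 (βhat + ξt • δS) δS) δS) := by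
      have h := hξeq
      rw [eq_div_iff (by linarith : τ - (0:ℝ) ≠ 0)] at h
      simp only [zero_smul, add_zero, sub_zero] at h
      linarith [h]
    clear hξeq hφ
    -- quantities
    have hQpos : (0:ℝ) < ∑ j, (δS j) ^ 2 := by
      obtain ⟨j1, hj1⟩ : ∃ j, δS j ≠ 0 := by
        by_contra h; push_neg at h; exact hδSne (funext h)
      have h1 := Finset.single_le_sum (f := fun j => (δS j) ^ 2) (fun j _ => sq_nonneg _)
        (Finset.mem_univ j1)
      have h2 : 0 < |δS j1| := abs_pos.2 hj1
      have h3 : (δS j1) ^ 2 = |δS j1| ^ 2 := (sq_abs _).symm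
      have h4 : 0 < |δS j1| ^ 2 := pow_pos h2 2
      linarith [h1, h3, h4]
    have hδSsq : ‖δS‖ ^ 2 ≤ ∑ j, (δS j) ^ 2 := by
      have h1 : ‖δS‖ ≤ Real.sqrt (∑ j, (δS j) ^ 2) := by
        rw [pi_norm_le_iff_of_nonneg (Real.sqrt_nonneg _)]
        intro j
        rw [Real.norm_eq_abs, ← Real.sqrt_sq_eq_abs]
        apply Real.sqrt_le_sqrt
        exact Finset.single_le_sum (f := fun j => (δS j) ^ 2) (fun j _ => sq_nonneg _)
          (Finset.mem_univ j)
      have h2 := pow_le_pow_left₀ (norm_nonneg δS) h1 2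
      rwa [Real.sq_sqrt (Finset.sum_nonneg fun j _ => sq_nonneg _)] at h2
    have hξnorm : ‖(βhat + ξt • δS) - βhat‖ < δ1 := by
      have heq : βhat + ξt • δS - βhat = ξt • δS := by
        ext j; show βhat j + ξt * δS j - βhat j = ξt * δS j; ring
      rw [heq, norm_smul, Real.norm_eq_abs]
      have hξ1 : |ξt| ≤ 1 := abs_le.2 ⟨by linarith [hξmem.1.le],
        le_trans hξmem.2.le hτmem.2.le⟩
      have h2 : |ξt| * ‖δS‖ ≤ 1 * ‖δS‖ := mul_le_mul_of_nonneg_right hξ1 (norm_nonneg _)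
      rw [one_mul] at h2
      linarith [h2, hδSnorm, hδ1']
    have hhessξ : (D2 (βhat + ξt • δS) δS) δS ≤ (-lam + ε0) * ∑ j, (δS j) ^ 2 := by
      have h1 := hhess δS hδS0
      have h2 : |((D2 (βhat + ξt • δS) - D2 βhat) δS) δS| ≤ ε0 * ‖δS‖ ^ 2 := by
        calc |((D2 (βhat + ξt • δS) - D2 βhat) δS) δS|
            = ‖((D2 (βhat + ξt • δS) - D2 βhat) δS) δS‖ := (Real.norm_eq_abs _).symm
          _ ≤ ‖(D2 (βhat + ξt • δS) - D2 βhat) δS‖ * ‖δS‖ :=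
              ContinuousLinearMap.le_opNorm _ _
          _ ≤ (‖D2 (βhat + ξt • δS) - D2 βhat‖ * ‖δS‖) * ‖δS‖ :=
              mul_le_mul_of_nonneg_right (ContinuousLinearMap.le_opNorm _ _) (norm_nonneg _)
          _ ≤ (ε0 * ‖δS‖) * ‖δS‖ :=
              mul_le_mul_of_nonneg_right
                (mul_le_mul_of_nonneg_right (hδ1 _ hξnorm) (norm_nonneg _)) (norm_nonneg _)
          _ = ε0 * ‖δS‖ ^ 2 := by ring
      have h3 : ((D2 (βhat + ξt • δS) - D2 βhat) δS) δS
          = (D2 (βhat + ξt • δS) δS) δS - (D2 βhat δS) δS := by simp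
      rw [h3] at h2
      have h4 : ε0 * ‖δS‖ ^ 2 ≤ ε0 * ∑ j, (δS j) ^ 2 :=
        mul_le_mul_of_nonneg_left hδSsq hε0pos.le
      have h5 := (abs_le.1 h2).2
      nlinarith [h1, h4, h5]
    -- penalty curvature bound
    have hpenbound : ∀ j : Fin p,
        -(κ * (τ * (δS j) ^ 2)) ≤ (deriv ρ (|βhat j| + τ * d j) - deriv ρ (|βhat j|)) * d j := by
      intro j
      by_cases hd0 : d j = 0
      · have h0 : δS j = 0 := (hd0iff j).1 hd0
        rw [hd0, h0]
        simp
      · have hjs := hjlt j hd0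
        have hd2' : (δS j) ^ 2 = d j * d j := by
          have : d j * d j = (σ j * σ j) * (δS j * δS j) := by
            show (σ j * δS j) * (σ j * δS j) = (σ j * σ j) * (δS j * δS j)
            ring
          rw [sq, this, hσsq j, one_mul]
        have hmem0 : |βhat j| ∈ Ioo (|βhat j| - r) (|βhat j| + r) := by
          constructor <;> linarith [hr]
        have hmem1 : |βhat j| + τ * d j ∈ Ioo (|βhat j| - r) (|βhat j| + r) := by
          have h1 : |τ * d j| < r := by
            rw [abs_mul]
            have h0 : |τ| * |d j| ≤ 1 * |d j| := mul_le_mul_of_nonneg_right hτ1 (abs_nonneg _)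
            rw [one_mul] at h0
            linarith [hdr j]
          have h2 := abs_lt.1 h1
          constructor
          · linarith [h2.1]
          · linarith [h2.2]
        rcases le_or_gt 0 (d j) with hd | hd
        · have h := hcurv j hjs (|βhat j|) (|βhat j| + τ * d j) hmem0 hmem1
            (by linarith [mul_nonneg hτpos.le hd])
          rw [show κ * (|βhat j| + τ * d j - |βhat j|) = κ * (τ * d j) from by ring] at h
          have key : 0 ≤ (deriv ρ (|βhat j| + τ * d j) - deriv ρ (|βhat j|)
              + κ * (τ * d j)) * d j := mul_nonneg (by linarith [h]) hd
          rw [show (deriv ρ (|βhat j| + τ * d j) - deriv ρ (|βhat j|)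
              + κ * (τ * d j)) * d j = (deriv ρ (|βhat j| + τ * d j) - deriv ρ (|βhat j|)) * d j
              + κ * (τ * (d j * d j)) from by ring] at key
          rw [hd2']
          linarith [key]
        · have h := hcurv j hjs (|βhat j| + τ * d j) (|βhat j|) hmem1 hmem0
            (by linarith [mul_nonpos_iff.2 (Or.inl ⟨hτpos.le, hd.le⟩)])
          rw [show κ * (|βhat j| - (|βhat j| + τ * d j)) = κ * (-(τ * d j)) from by ring] at h
          have key : 0 ≤ (κ * (-(τ * d j)) - (deriv ρ (|βhat j| + τ * d j)
              - deriv ρ (|βhat j|))) * (-(d j)) := mul_nonneg (by linarith [h]) (by linarith)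
          rw [show (κ * (-(τ * d j)) - (deriv ρ (|βhat j| + τ * d j)
              - deriv ρ (|βhat j|))) * (-(d j)) = (deriv ρ (|βhat j| + τ * d j)
              - deriv ρ (|βhat j|)) * d j + κ * (τ * (d j * d j)) from by ring] at key
          rw [hd2']
          linarith [key]
    have hT2 : -(θ * κ * τ * ∑ j, (δS j) ^ 2) ≤
        ∑ j, θ * ((deriv ρ (|βhat j| + τ * d j) - deriv ρ (|βhat j|)) * d j) := by
      have h1 : ∑ j, (-(θ * κ * τ)) * (δS j) ^ 2 ≤
          ∑ j, θ * ((deriv ρ (|βhat j| + τ * d j) - deriv ρ (|βhat j|)) * d j) := by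
        apply Finset.sum_le_sum
        intro j _
        have h2 := mul_le_mul_of_nonneg_left (hpenbound j) hθ.le
        rw [show θ * -(κ * (τ * δS j ^ 2)) = -(θ * κ * τ) * δS j ^ 2 from by ring] at h2
        exact h2
      calc -(θ * κ * τ * ∑ j, (δS j) ^ 2) = ∑ j, (-(θ * κ * τ)) * (δS j) ^ 2 := by
            rw [← Finset.mul_sum]; ring
        _ ≤ _ := h1
    -- assemble
    have hs : ∑ j, θ * ((deriv ρ (|βhat j| + τ * d j) - deriv ρ (|βhat j|)) * d j)
        = ∑ j, θ * (deriv ρ (|βhat j| + τ * d j) * d j)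
          - ∑ j, θ * (deriv ρ (|βhat j|) * d j) := by
      rw [← Finset.sum_sub_distrib]
      exact Finset.sum_congr rfl fun j _ => by ring
    have hZ : τ * ((D2 (βhat + ξt • δS) δS) δS) ≤ τ * ((-lam + ε0) * ∑ j, (δS j) ^ 2) :=
      mul_le_mul_of_nonneg_left hhessξ hτpos.le
    have hfinal : F (βhat + δS) - F βhat ≤
        τ * ((-lam + ε0) * ∑ j, (δS j) ^ 2) + θ * κ * τ * ∑ j, (δS j) ^ 2 := by
      rw [hmvt]
      have hsplit : D1 (βhat + τ • δS) δS - ∑ j, θ * (deriv ρ (|βhat j| + τ * d j) * d j)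
          = (D1 (βhat + τ • δS) δS - D1 βhat δS)
            - (∑ j, θ * ((deriv ρ (|βhat j| + τ * d j) - deriv ρ (|βhat j|)) * d j))
            + (D1 βhat δS - ∑ j, θ * (deriv ρ (|βhat j|) * d j)) := by
        rw [hs]; ring
      rw [hsplit, hg'0, add_zero, hT1]
      linarith [hT2, hZ]
    have hcoef : τ * ((-lam + ε0) * ∑ j, (δS j) ^ 2) + θ * κ * τ * ∑ j, (δS j) ^ 2
        = -(τ * (ε0 * ∑ j, (δS j) ^ 2)) := by
      rw [hε0def]; ring
    have hprod : 0 < τ * (ε0 * ∑ j, (δS j) ^ 2) := mul_pos hτpos (mul_pos hε0pos hQpos)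
    rw [hcoef] at hfinal
    linarith [hfinal, hprod]
  -- Claim 2 : strict decrease from the off-support part
  have hC2 : δO ≠ 0 → F β < F (βhat + δS) := by
    intro hδOne
    have hFval : ∀ x, F x = L x - ∑ j, θ * ρ (|x j|) := fun x => by rw [hF]
    obtain ⟨j0, hj0⟩ : ∃ j, δO j ≠ 0 := by
      by_contra h; push_neg at h; exact hδOne (funext h)
    have hj0s : s ≤ (j0 : ℕ) := by
      by_contra h
      push_neg at h
      exact hj0 (by rw [hδOdef]; simp [h])
    have hmθ : m ≤ θ * ρ0' := by
      have := hmle j0 hj0s; linarith [abs_nonneg (D1 βhat (e j0))]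
    have hθρ : 0 < θ * ρ0' := lt_of_lt_of_le hmpos hmθ
    have hρ0pos : 0 < ρ0' := by
      rcases le_or_gt ρ0' 0 with h | h
      · exact absurd hθρ (not_lt.2 (mul_nonpos_iff.2 (Or.inl ⟨hθ.le, h⟩)))
      · exact h
    set c : ℝ := ρ0' - m / (3 * θ) with hcdef
    have hcpos : 0 < c := by
      rw [hcdef, sub_pos, div_lt_iff₀ (by positivity)]
      have h3 : ρ0' * (3 * θ) = 3 * (θ * ρ0') := by ring
      rw [h3]
      linarith [hθρ, hmθ]
    have hpen : ∀ t : ℝ, 0 ≤ t → t < δ3 → c * t ≤ ρ t := fun t h1 h2 =>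
      penalty_linear_lb hρ0 hmono hdiff hcpos (fun u hu hud => hδ3 u hu hud) h1 h2
    set βS : Fin p → ℝ := βhat + δS with hβSdef
    have hβSj : ∀ j : Fin p, s ≤ (j : ℕ) → βS j = 0 := by
      intro j hj
      show βhat j + δS j = 0
      rw [hδS0 j hj, hsupp0 j hj, add_zero]
    have hβj : ∀ j : Fin p, s ≤ (j : ℕ) → β j = δO j := by
      intro j hj
      rw [hβdecomp]
      show βS j + δO j = δO j
      rw [hβSj j hj, zero_add]
    have hβjlt : ∀ j : Fin p, (j : ℕ) < s → β j = βS j := by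
      intro j hj
      have hδOj0 : δO j = 0 := by rw [hδOdef]; simp [hj]
      rw [hβdecomp]
      show βS j + δO j = βS j
      rw [hδOj0, add_zero]
    have hline : ∀ t : ℝ, HasDerivAt (fun t => L (βS + t • δO)) (D1 (βS + t • δO) δO) t :=
      fun t => hasDerivAt_line hLdiff βS δO t
    obtain ⟨τ, hτmem, hτeq⟩ := exists_hasDerivAt_eq_slope (fun t => L (βS + t • δO))
      (fun t => D1 (βS + t • δO) δO) one_pos
      (fun t _ => (hline t).continuousAt.continuousWithinAt)
      (fun t ht => hline t)
    set ξ : Fin p → ℝ := βS + τ • δO with hξdef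
    have hβeq : βS + (1:ℝ) • δO = β := by rw [one_smul, hβdecomp]
    have hLdiffval : L β - L βS = D1 ξ δO := by
      rw [hτeq, hβeq]
      simp
    clear hτeq hline
    have hξnorm : ‖ξ - βhat‖ < δ2 := by
      have hco : ∀ j, |(ξ - βhat) j| ≤ |δ j| := by
        intro j
        have : (ξ - βhat) j = δS j + τ * δO j := by
          show βhat j + δS j + τ * δO j - βhat j = δS j + τ * δO j
          ring
        rw [this]
        by_cases hj : (j : ℕ) < s
        · have h1 : δO j = 0 := by rw [hδOdef]; simp [hj]
          have h2 : δS j = δ j := by rw [hδSdef]; simp [hj]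
          rw [h1, h2]; simp
        · push_neg at hj
          have h1 : δS j = 0 := hδS0 j hj
          have h2 : δO j = δ j := by rw [hδOdef]; simp [Nat.not_lt.2 hj]
          rw [h1, h2, zero_add, abs_mul]
          have hτ1 : |τ| ≤ 1 := by
            rw [abs_le]; constructor <;> [linarith [hτmem.1]; linarith [hτmem.2]]
          have h0 : |τ| * |δ j| ≤ 1 * |δ j| := mul_le_mul_of_nonneg_right hτ1 (abs_nonneg _)
          rw [one_mul] at h0
          exact h0
      have : ‖ξ - βhat‖ ≤ ‖δ‖ := by
        rw [pi_norm_le_iff_of_nonneg (norm_nonneg δ)]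
        intro j
        calc ‖(ξ - βhat) j‖ = |(ξ - βhat) j| := Real.norm_eq_abs _
          _ ≤ |δ j| := hco j
          _ ≤ ‖δ‖ := hδj j
      linarith
    have hej : ∀ j : Fin p, ‖e j‖ ≤ 1 := by
      intro j
      rw [pi_norm_le_iff_of_nonneg zero_le_one]
      intro k
      show ‖(Pi.single j (1:ℝ) : Fin p → ℝ) k‖ ≤ 1
      rw [Real.norm_eq_abs, Pi.single_apply]
      split <;> norm_num
    have hD1ξ : ∀ j : Fin p, s ≤ (j : ℕ) → |D1 ξ (e j)| ≤ θ * ρ0' - 2 * m / 3 := by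
      intro j hj
      have h1 : |D1 ξ (e j) - D1 βhat (e j)| ≤ m / 3 := by
        have h2 : D1 ξ (e j) - D1 βhat (e j) = (D1 ξ - D1 βhat) (e j) := by simp
        rw [h2]
        calc |(D1 ξ - D1 βhat) (e j)| = ‖(D1 ξ - D1 βhat) (e j)‖ := (Real.norm_eq_abs _).symm
          _ ≤ ‖D1 ξ - D1 βhat‖ * ‖e j‖ := ContinuousLinearMap.le_opNorm _ _
          _ ≤ (m / 3) * 1 := mul_le_mul (hδ2 ξ hξnorm) (hej j) (norm_nonneg _) (by linarith)
          _ = m / 3 := mul_one _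
      have h3 := hmle j hj
      have h4 := abs_sub_abs_le_abs_sub (D1 ξ (e j)) (D1 βhat (e j))
      linarith
    have expand : D1 ξ δO = ∑ j, δO j * D1 ξ (e j) := by
      simp only [hedef]
      exact clm_apply_eq_sum (D1 ξ) δO
    have hsum : F β - F βS = ∑ j, (δO j * D1 ξ (e j) - θ * (ρ (|β j|) - ρ (|βS j|))) := by
      rw [hFval β, hFval βS]
      have hs1 : ∑ j, (δO j * D1 ξ (e j) - θ * (ρ (|β j|) - ρ (|βS j|))) =
          (∑ j, δO j * D1 ξ (e j)) - ((∑ j, θ * ρ (|β j|)) - (∑ j, θ * ρ (|βS j|))) := by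
        rw [Finset.sum_sub_distrib]
        congr 1
        rw [← Finset.sum_sub_distrib]
        apply Finset.sum_congr rfl
        intro j _
        ring
      rw [hs1, ← expand, ← hLdiffval]
      ring
    have hterm : ∀ j : Fin p,
        δO j * D1 ξ (e j) - θ * (ρ (|β j|) - ρ (|βS j|)) ≤ -(m / 3) * |δO j| := by
      intro j
      by_cases hj : (j : ℕ) < s
      · have hδOj0 : δO j = 0 := by rw [hδOdef]; simp [hj]
        rw [hδOj0, hβjlt j hj]
        simp
      · push_neg at hj
        have h0 : βS j = 0 := hβSj j hj
        have h1 : β j = δO j := hβj j hj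
        rw [h0, h1, abs_zero, hρ0]
        have hpenj : c * |δO j| ≤ ρ (|δO j|) :=
          hpen _ (abs_nonneg _) (lt_of_le_of_lt (hδOj j) hδ3')
        have hD := hD1ξ j hj
        have habs : δO j * D1 ξ (e j) ≤ |δO j| * (θ * ρ0' - 2 * m / 3) := by
          calc δO j * D1 ξ (e j) ≤ |δO j * D1 ξ (e j)| := le_abs_self _
            _ = |δO j| * |D1 ξ (e j)| := abs_mul _ _
            _ ≤ |δO j| * (θ * ρ0' - 2 * m / 3) :=
              mul_le_mul_of_nonneg_left hD (abs_nonneg _)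
        have hpen' : θ * (c * |δO j|) ≤ θ * ρ (|δO j|) :=
          mul_le_mul_of_nonneg_left hpenj hθ.le
        have hθm : θ * (m / (3 * θ)) = m / 3 := by
          rw [mul_comm (3:ℝ) θ, ← div_div, ← mul_div_assoc, mul_div_assoc', mul_comm θ m,
            mul_div_assoc, div_self (ne_of_gt hθ), mul_one]
        have hθc : θ * (c * |δO j|) = (θ * ρ0' - m / 3) * |δO j| := by
          rw [hcdef]
          linear_combination (-(|δO j|)) * hθm
        rw [hθc] at hpen'
        linarith [abs_nonneg (δO j), habs, hpen']
    have hfin : F β - F βS ≤ -(m / 3) * ∑ j, |δO j| := by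
      rw [hsum, Finset.mul_sum]
      exact Finset.sum_le_sum fun j _ => hterm j
    have hpos : 0 < ∑ j, |δO j| := by
      have h1 := Finset.single_le_sum (f := fun j => |δO j|) (fun j _ => abs_nonneg _)
        (Finset.mem_univ j0)
      have h2 : 0 < |δO j0| := abs_pos.2 hj0
      linarith
    have hneg : 0 < (m / 3) * ∑ j, |δO j| := mul_pos (by linarith) hpos
    linarith [hfin, hneg]
  by_cases hO : δO = 0
  · have hβS : β = βhat + δS := by rw [hβdecomp, hO]; simp
    have hSne : δS ≠ 0 := by
      intro h
      apply hβne
      rw [hβS, h]; simp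
    rw [hβS]
    exact hC1 hSne
  · have h2 := hC2 hO
    by_cases hS : δS = 0
    · rw [hS] at h2
      simpa using h2
    · exact lt_trans h2 (hC1 hS)
end
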